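/- Let n ≥ 2 be an integer, H ≥ 0 and C real, and define q(v) = C − v^{2−2n} − (1+H²)v² − 2H·v^{2−n} for v > 0, and v₀ = ((√(H²n² + 4(n−1)) + (n−2)H)/(2 + 2H²))^{1/n}. Then: (i) q′(v) > 0 for 0 < v < v₀ and q′(v) < 0 for v > v₀ (so v₀ is the unique positive critical point of q, and q is strictly increasing on (0, v₀] and strictly decreasing on [v₀, ∞)); (ii) if moreover C > c₀, where c₀ = n·(2+2H²)^{(n−2)/n} · (2 + nH² + H√(H²n² + 4(n−1))) / ((n−2)H + √(H²n² + 4(n−1)))^{(2n−2)/n}, then q has exactly two zeros t₁, t₂ in (0, ∞), they satisfy t₁ < v₀ < t₂, and q(v) > 0 for all v ∈ (t₁, t₂). -/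

import Mathlib

set_option maxHeartbeats 1600000


open Real Set

/-- For `n ≥ 2`, `H ≥ 0`, let
`q v = C − v^{2−2n} − (1+H²)v² − 2H v^{2−n}` and
`v₀ = ((√(H²n² + 4(n−1)) + (n−2)H)/(2+2H²))^{1/n}`.  Then `q` is strictly increasing on
`(0, v₀]` and strictly decreasing on `[v₀, ∞)` (with `q' > 0` before `v₀` and `q' < 0`
after), and if `C > c₀` then `q` has exactly two positive zeros `t₁ < v₀ < t₂` with
`q > 0` on `(t₁, t₂)`. -/
theorem stmt_3 (n : ℕ) (hn : 2 ≤ n) (H C : ℝ) (hH : 0 ≤ H)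
    (q : ℝ → ℝ)
    (hq : q = fun v : ℝ => C - v ^ (2 - 2 * (n : ℤ)) - (1 + H ^ 2) * v ^ 2
      - 2 * H * v ^ (2 - (n : ℤ)))
    (v₀ : ℝ)
    (hv₀ : v₀ = ((Real.sqrt (H ^ 2 * (n : ℝ) ^ 2 + 4 * ((n : ℝ) - 1)) + ((n : ℝ) - 2) * H)
      / (2 + 2 * H ^ 2)) ^ ((1 : ℝ) / (n : ℝ)))
    (c₀ : ℝ)
    (hc₀ : c₀ = (n : ℝ) * (2 + 2 * H ^ 2) ^ (((n : ℝ) - 2) / (n : ℝ))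
      * (2 + (n : ℝ) * H ^ 2 + H * Real.sqrt (H ^ 2 * (n : ℝ) ^ 2 + 4 * ((n : ℝ) - 1)))
      / (((n : ℝ) - 2) * H + Real.sqrt (H ^ 2 * (n : ℝ) ^ 2 + 4 * ((n : ℝ) - 1)))
        ^ ((2 * (n : ℝ) - 2) / (n : ℝ))) :
    (∀ v : ℝ, 0 < v → v < v₀ → 0 < deriv q v) ∧
    (∀ v : ℝ, v₀ < v → deriv q v < 0) ∧
    StrictMonoOn q (Set.Ioc 0 v₀) ∧
    StrictAntiOn q (Set.Ici v₀) ∧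
    (C > c₀ → ∃ t₁ t₂ : ℝ, 0 < t₁ ∧ t₁ < v₀ ∧ v₀ < t₂ ∧ q t₁ = 0 ∧ q t₂ = 0 ∧
      (∀ v ∈ Set.Ioo t₁ t₂, 0 < q v) ∧
      (∀ v : ℝ, 0 < v → q v = 0 → v = t₁ ∨ v = t₂)) := by
  have hn2 : (2:ℝ) ≤ (n:ℝ) := by exact_mod_cast hn
  have hn0 : (n:ℝ) ≠ 0 := by positivity
  have hnne : n ≠ 0 := by omega
  set S := Real.sqrt (H ^ 2 * (n : ℝ) ^ 2 + 4 * ((n : ℝ) - 1)) with hSdef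
  have hS0 : 0 ≤ S := Real.sqrt_nonneg _
  have hS2 : S ^ 2 = H ^ 2 * (n : ℝ) ^ 2 + 4 * ((n : ℝ) - 1) :=
    Real.sq_sqrt (by nlinarith [sq_nonneg H])
  have hSH : ((n:ℝ) - 2) * H < S := by
    nlinarith [hS0, sq_nonneg H, mul_nonneg (mul_nonneg (sub_nonneg.2 hn2) hH) hS0]
  set B := 2 + 2 * H ^ 2 with hB
  have hBpos : (0:ℝ) < B := by rw [hB]; positivity
  set w₀ := (S + ((n : ℝ) - 2) * H) / B with hw₀def
  have hApos : (0:ℝ) < S + ((n:ℝ)-2)*H := by nlinarith [mul_nonneg (sub_nonneg.2 hn2) hH]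
  have hw₀pos : 0 < w₀ := div_pos hApos hBpos
  have hBw : B * w₀ = S + ((n:ℝ)-2)*H := by
    rw [hw₀def]; field_simp
  have hquad : (1 + H^2) * w₀^2 = H * ((n:ℝ)-2) * w₀ + ((n:ℝ)-1) := by
    have hSe : S = B * w₀ - ((n:ℝ)-2)*H := by linarith
    have h2 : (B * w₀ - ((n:ℝ)-2)*H)^2 = H^2*(n:ℝ)^2 + 4*((n:ℝ)-1) := by
      rw [← hSe]; exact hS2
    rw [hB] at h2
    have h3 : (4*(1+H^2)) * ((1 + H^2) * w₀^2)
        = (4*(1+H^2)) * (H * ((n:ℝ)-2) * w₀ + ((n:ℝ)-1)) := by linear_combination h2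
    exact mul_left_cancel₀ (by positivity) h3
  have hfac : ((n:ℝ)-2) * H < (1 + H^2) * w₀ := by
    have h := hBw; rw [hB] at h; nlinarith [hSH]
  have hv₀w : v₀ = w₀ ^ ((1:ℝ)/(n:ℝ)) := hv₀
  have hv₀pos : 0 < v₀ := by rw [hv₀w]; exact Real.rpow_pos_of_pos hw₀pos _
  have hvn : v₀ ^ (n:ℕ) = w₀ := by
    rw [hv₀w, ← Real.rpow_natCast (w₀ ^ ((1:ℝ)/(n:ℝ))) n, ← Real.rpow_mul hw₀pos.le,
      one_div_mul_cancel hn0, Real.rpow_one]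
  -- derivative
  have hderiv : ∀ v : ℝ, v ≠ 0 → HasDerivAt q
      (-((2 - 2*(n:ℝ)) * v ^ (2 - 2*(n:ℤ) - 1)) - (1+H^2)*(2*v)
        - 2*H*((2 - (n:ℝ)) * v ^ (2 - (n:ℤ) - 1))) v := by
    intro v hv
    rw [hq]
    have h1 := hasDerivAt_zpow (2 - 2*(n:ℤ)) v (Or.inl hv)
    have h2 := hasDerivAt_pow 2 v
    have h3 := hasDerivAt_zpow (2 - (n:ℤ)) v (Or.inl hv)
    have h := ((h1.const_sub C).sub (h2.const_mul (1+H^2))).sub (h3.const_mul (2*H))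
    refine h.congr_deriv ?_
    push_cast
    ring
  have hderiv' : ∀ v : ℝ, 0 < v → deriv q v =
      v ^ (1 - 2*(n:ℤ)) * (2*((n:ℝ)-1) + 2*H*((n:ℝ)-2)*v^(n:ℕ) - 2*(1+H^2)*(v^(n:ℕ))^2) := by
    intro v hv
    rw [(hderiv v hv.ne').deriv]
    have e1 : v ^ (2 - 2*(n:ℤ) - 1) = v ^ (1 - 2*(n:ℤ)) := by congr 1; ring
    have e2 : v ^ (2 - (n:ℤ) - 1) = v ^ (1 - 2*(n:ℤ)) * v ^ (n:ℕ) := by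
      rw [← zpow_natCast v n, ← zpow_add₀ hv.ne']; congr 1; ring
    have e3 : v ^ (1 - 2*(n:ℤ)) * (v^(n:ℕ))^2 = v := by
      rw [← pow_mul, ← zpow_natCast v (n*2), ← zpow_add₀ hv.ne']
      have : (1 - 2*(n:ℤ)) + (n*2 : ℕ) = 1 := by push_cast; ring
      rw [this, zpow_one]
    rw [e1, e2]
    linear_combination 2*(1+H^2) * e3
  have hP : ∀ w : ℝ, (2*((n:ℝ)-1) + 2*H*((n:ℝ)-2)*w - 2*(1+H^2)*w^2)
      = 2*(w₀ - w) * ((1+H^2)*(w + w₀) - H*((n:ℝ)-2)) := by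
    intro w; linear_combination (-2 : ℝ)*hquad
  have hfacpos : ∀ w : ℝ, 0 < w → 0 < (1+H^2)*(w + w₀) - H*((n:ℝ)-2) := by
    intro w hw
    nlinarith [hfac, mul_pos (show (0:ℝ) < 1+H^2 by positivity) hw]
  have hpos : ∀ v : ℝ, 0 < v → v < v₀ → 0 < deriv q v := by
    intro v hv hvv
    rw [hderiv' v hv, hP]
    have hw : v^(n:ℕ) < w₀ := hvn ▸ pow_lt_pow_left₀ hvv hv.le hnne
    have hwpos : 0 < v^(n:ℕ) := pow_pos hv n
    exact mul_pos (zpow_pos hv _)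
      (mul_pos (by linarith) (hfacpos _ hwpos))
  have hneg : ∀ v : ℝ, v₀ < v → deriv q v < 0 := by
    intro v hvv
    have hv : 0 < v := hv₀pos.trans hvv
    rw [hderiv' v hv, hP]
    have hw : w₀ < v^(n:ℕ) := hvn ▸ pow_lt_pow_left₀ hvv hv₀pos.le hnne
    have hwpos : 0 < v^(n:ℕ) := pow_pos hv n
    exact mul_neg_of_pos_of_neg (zpow_pos hv _)
      (mul_neg_of_neg_of_pos (by linarith) (hfacpos _ hwpos))
  have hcont : ∀ v : ℝ, 0 < v → ContinuousAt q v := fun v hv => (hderiv v hv.ne').continuousAt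
  have hmono : StrictMonoOn q (Set.Ioc 0 v₀) := by
    apply strictMonoOn_of_deriv_pos (convex_Ioc 0 v₀)
    · exact fun v hv => (hcont v hv.1).continuousWithinAt
    · rw [interior_Ioc]; exact fun v hv => hpos v hv.1 hv.2
  have hanti : StrictAntiOn q (Set.Ici v₀) := by
    apply strictAntiOn_of_deriv_neg (convex_Ici v₀)
    · exact fun v hv => (hcont v (lt_of_lt_of_le hv₀pos hv)).continuousWithinAt
    · rw [interior_Ici]; exact fun v hv => hneg v hv
  -- value at v₀
  have hnum : 2 + (n:ℝ)*H^2 + H*S = B * (1 + H*w₀) := by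
    linear_combination (-1 : ℝ)*hB - H*hBw
  have hApow : (((n:ℝ)-2)*H + S) = B * w₀ := by linarith
  have hw₀r : w₀ ^ ((2*(n:ℝ)-2)/(n:ℝ)) ≠ 0 := (Real.rpow_pos_of_pos hw₀pos _).ne'
  have hkey : c₀ = (n:ℝ)*(1+H*w₀) * w₀ ^ (-((2*(n:ℝ)-2)/(n:ℝ))) := by
    rw [hc₀, hnum, hApow, Real.mul_rpow hBpos.le hw₀pos.le]
    have hBr : B ^ ((2*(n:ℝ)-2)/(n:ℝ)) = B ^ (((n:ℝ)-2)/(n:ℝ)) * B := by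
      have he : (2*(n:ℝ)-2)/(n:ℝ) = ((n:ℝ)-2)/(n:ℝ) + 1 := by field_simp; ring
      rw [he, Real.rpow_add hBpos, Real.rpow_one]
    rw [hBr, Real.rpow_neg hw₀pos.le]
    field_simp
  have hv₀z : v₀ ^ (2 - 2*(n:ℤ)) = w₀ ^ (-((2*(n:ℝ)-2)/(n:ℝ))) := by
    rw [← Real.rpow_intCast v₀ (2 - 2*(n:ℤ)), hv₀w, ← Real.rpow_mul hw₀pos.le]
    congr 1
    push_cast
    field_simp
    ring
  have f1 : v₀ ^ (2 - 2*(n:ℤ)) * (v₀^(n:ℕ))^2 = v₀^2 := by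
    rw [← pow_mul, ← zpow_natCast v₀ (n*2), ← zpow_add₀ hv₀pos.ne']
    have : (2 - 2*(n:ℤ)) + (n*2 : ℕ) = ((2:ℕ) : ℤ) := by push_cast; ring
    rw [this, zpow_natCast]
  have f2 : v₀ ^ (2 - 2*(n:ℤ)) * v₀^(n:ℕ) = v₀ ^ (2 - (n:ℤ)) := by
    rw [← zpow_natCast v₀ n, ← zpow_add₀ hv₀pos.ne']; congr 1; ring
  have hsum : 1 + (1+H^2)*w₀^2 + 2*H*w₀ = (n:ℝ)*(1+H*w₀) := by linear_combination hquad
  have hqv₀ : q v₀ = C - c₀ := by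
    have hfactored : v₀ ^ (2 - 2*(n:ℤ)) + (1+H^2)*v₀^2 + 2*H*v₀^(2 - (n:ℤ))
        = v₀ ^ (2 - 2*(n:ℤ)) * (1 + (1+H^2)*(v₀^(n:ℕ))^2 + 2*H*v₀^(n:ℕ)) := by
      linear_combination (-(1+H^2))*f1 - 2*H*f2
    rw [hq]
    simp only
    rw [show C - v₀ ^ (2 - 2 * (n:ℤ)) - (1 + H ^ 2) * v₀ ^ 2 - 2 * H * v₀ ^ (2 - (n:ℤ))
        = C - (v₀ ^ (2 - 2*(n:ℤ)) + (1+H^2)*v₀^2 + 2*H*v₀^(2 - (n:ℤ))) by ring,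
      hfactored, hvn, hsum, hv₀z, hkey]
    ring
  refine ⟨hpos, hneg, hmono, hanti, fun hC => ?_⟩
  have hq₀ : 0 < q v₀ := by rw [hqv₀]; linarith
  -- small point a with q a < 0
  set a := min (v₀/2) (1/(|C|+1)) with ha
  have hCa : (0:ℝ) < |C| + 1 := by positivity
  have hapos : 0 < a := lt_min (by linarith) (by positivity)
  have hav : a < v₀ := lt_of_le_of_lt (min_le_left _ _) (by linarith)
  have hqa : q a < 0 := by
    have h1 : a ≤ 1/(|C|+1) := min_le_right _ _
    have h2 : |C| + 1 ≤ a⁻¹ := by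
      rw [le_inv_comm₀ hCa hapos]
      simpa [one_div] using h1
    have hz : a ^ (2 - 2*(n:ℤ)) = (a⁻¹) ^ (2*n - 2 : ℕ) := by
      rw [← zpow_natCast (a⁻¹) (2*n-2), inv_zpow, ← zpow_neg]
      congr 1
      have : (2*n - 2 : ℕ) = (2*n : ℕ) - 2 := rfl
      push_cast [Nat.cast_sub (by omega : 2 ≤ 2*n)]
      ring
    have h3 : |C| + 1 ≤ a ^ (2 - 2*(n:ℤ)) := by
      rw [hz]
      exact h2.trans (le_self_pow₀ (by linarith [abs_nonneg C]) (by omega))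
    have h4 : (0:ℝ) ≤ 2*H*a^(2 - (n:ℤ)) :=
      mul_nonneg (by positivity) (zpow_pos hapos _).le
    have h5 : (0:ℝ) ≤ (1+H^2)*a^2 := mul_nonneg (by positivity) (sq_nonneg a)
    have hqa' : q a = C - a ^ (2 - 2*(n:ℤ)) - (1+H^2)*a^2 - 2*H*a^(2 - (n:ℤ)) := by rw [hq]
    rw [hqa']
    linarith [le_abs_self C]
  -- large point b with q b < 0
  set b := max (v₀+1) (|C|+1) with hb'
  have hbv : v₀ < b := lt_of_lt_of_le (by linarith) (le_max_left _ _)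
  have hb1 : (1:ℝ) ≤ b := le_trans (by linarith [abs_nonneg C]) (le_max_right _ _)
  have hbpos : 0 < b := by linarith
  have hqb : q b < 0 := by
    have h3 : |C| + 1 ≤ b^2 :=
      le_trans (le_max_right (v₀+1) (|C|+1)) (le_self_pow₀ hb1 two_ne_zero)
    have h4 : (0:ℝ) ≤ 2*H*b^(2 - (n:ℤ)) :=
      mul_nonneg (by positivity) (zpow_pos hbpos _).le
    have h5 : (0:ℝ) < b ^ (2 - 2*(n:ℤ)) := zpow_pos hbpos _
    have hqb' : q b = C - b ^ (2 - 2*(n:ℤ)) - (1+H^2)*b^2 - 2*H*b^(2 - (n:ℤ)) := by rw [hq]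
    have h6 : b^2 + (H*b)^2 = (1+H^2)*b^2 := by ring
    rw [hqb']
    linarith [le_abs_self C, sq_nonneg (H*b)]
  have hcontIcc : ∀ x y : ℝ, 0 < x → ContinuousOn q (Icc x y) :=
    fun x y hx v hv => (hcont v (lt_of_lt_of_le hx hv.1)).continuousWithinAt
  obtain ⟨t₁, ht₁mem, ht₁⟩ :=
    intermediate_value_Ioo hav.le (hcontIcc a v₀ hapos) (⟨hqa, hq₀⟩ : (0:ℝ) ∈ Ioo (q a) (q v₀))
  obtain ⟨t₂, ht₂mem, ht₂⟩ :=
    intermediate_value_Ioo' hbv.le (hcontIcc v₀ b hv₀pos) (⟨hqb, hq₀⟩ : (0:ℝ) ∈ Ioo (q b) (q v₀))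
  have ht₁pos : 0 < t₁ := hapos.trans ht₁mem.1
  have ht₁v : t₁ < v₀ := ht₁mem.2
  have hvt₂ : v₀ < t₂ := ht₂mem.1
  refine ⟨t₁, t₂, ht₁pos, ht₁v, hvt₂, ht₁, ht₂, ?_, ?_⟩
  · intro v hv
    rcases le_or_gt v v₀ with h | h
    · have := hmono ⟨ht₁pos, ht₁v.le⟩ ⟨ht₁pos.trans hv.1, h⟩ hv.1
      rw [ht₁] at this
      exact this
    · have h2 := hanti (le_of_lt h : v ∈ Ici v₀) (hvt₂.le : t₂ ∈ Ici v₀) hv.2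
      rw [ht₂] at h2
      exact h2
  · intro v hv hqv
    rcases le_or_gt v v₀ with h | h
    · exact Or.inl (hmono.injOn ⟨hv, h⟩ ⟨ht₁pos, ht₁v.le⟩ (by rw [hqv, ht₁]))
    · exact Or.inr (hanti.injOn (le_of_lt h : v ∈ Ici v₀) (hvt₂.le : t₂ ∈ Ici v₀)
        (by rw [hqv, ht₂]))
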